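/- Let k | n, and let 𝒜 = ⟨(A_p)^{q+1}, 0⟩ be a maximal pair where A_p = red(A) is the reduction of A and q ≥ 1. If 𝒬 = ⟨A_{p−1}(a_p + 1) 0^{pq}, 0⟩ is a well-defined pair (i.e., a_p < s−1), then 𝒬 is maximal and θ(𝒬) = 𝒜. -/

import Mathlib

/-- Right rotation by `i` of a pair in `Σ^n × ℤ/k`. -/
def rotPair (s k : ℕ) (i : ℕ) (P : List (Fin s) × ZMod k) : List (Fin s) × ZMod k :=
  (P.1.rotate i, P.2 + (i : ZMod k))

/-- The order ≻ : `P ≻ Q` iff (same second component and `P.1 > Q.1` lexicographically)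
or `(k-1-P.2) > (k-1-Q.2)`, i.e. `P.2 < Q.2` as residues. -/
def succPair (s k : ℕ) (P Q : List (Fin s) × ZMod k) : Prop :=
  (List.Lex (· < ·) Q.1 P.1 ∧ P.2 = Q.2) ∨ P.2.val < Q.2.val

/-- A pair is maximal when no rotation of it is ≻-greater than it. -/
def isMaxPair (s k : ℕ) (P : List (Fin s) × ZMod k) : Prop :=
  ∀ i : ℕ, ¬ succPair s k (rotPair s k i P) P

/-- The operator θ on words. -/
def thetaWord (s k : ℕ) (A : List (Fin s)) : List (Fin s) :=
  let n := A.length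
  let i := n - (A.reverse.takeWhile (fun a => a.val == 0)).length
  match A[i - 1]? with
  | none => A
  | some a =>
      let j := i + ((n - i) % k)
      let q := n / j
      (List.replicate q (A.take (i-1) ++
          (⟨a.val - 1, Nat.lt_of_le_of_lt (Nat.sub_le _ _) a.isLt⟩ : Fin s) ::
          List.replicate (j - i)
            (⟨s - 1, Nat.sub_lt (Nat.lt_of_le_of_lt (Nat.zero_le a.val) a.isLt) Nat.one_pos⟩ : Fin s))).flatten
        ++ A.take (n - q * j)

/-- The operator θ on pairs with second component 0. -/
def thetaPair (s k : ℕ) (P : List (Fin s) × ZMod k) : List (Fin s) × ZMod k :=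
  (thetaWord s k P.1, 0)

/-- Length of the reduction of a word: the least `p` with `k ∣ p`, `p ∣ |A|`
and `A = (A.take p)^{|A|/p}`. -/
noncomputable def reduceLen (s k : ℕ) (A : List (Fin s)) : ℕ :=
  sInf {p : ℕ | k ∣ p ∧ p ∣ A.length ∧
    A = (List.replicate (A.length / p) (A.take p)).flatten}

/-- The reduction of a word. -/
noncomputable def reduceWord (s k : ℕ) (A : List (Fin s)) : List (Fin s) := A.take (reduceLen s k A)


namespace Stmt17Aux
variable {α : Type*}

lemma getD_append_left (l1 l2 : List α) (z : α) (t : ℕ) (h : t < l1.length) :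
    (l1 ++ l2).getD t z = l1.getD t z := by
  simp [List.getD_eq_getElem?_getD, List.getElem?_append, h]

lemma getD_append_right (l1 l2 : List α) (z : α) (t : ℕ) (h : l1.length ≤ t) :
    (l1 ++ l2).getD t z = l2.getD (t - l1.length) z := by
  simp [List.getD_eq_getElem?_getD, List.getElem?_append, Nat.not_lt.mpr h]

lemma getD_replicate (c z : α) (m t : ℕ) (h : t < m) :
    (List.replicate m c).getD t z = c := by
  simp [List.getD_eq_getElem?_getD, List.getElem?_replicate, h]

lemma getD_take (L : List α) (z : α) (m t : ℕ) (h : t < m) :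
    (L.take m).getD t z = L.getD t z := by
  simp [List.getD_eq_getElem?_getD, List.getElem?_take, h]

lemma getD_cons_zero (c : α) (l : List α) (z : α) : (c :: l).getD 0 z = c := rfl

lemma getD_cons_succ (c : α) (l : List α) (z : α) (t : ℕ) :
    (c :: l).getD (t+1) z = l.getD t z := rfl

lemma len_flatten_replicate (L : List α) (m : ℕ) :
    ((List.replicate m L).flatten).length = m * L.length := by
  induction m with
  | zero => simp
  | succ m ih => simp [List.replicate_succ, ih]; ring

lemma getD_flatten_replicate (L : List α) (z : α) (m t : ℕ) (h : t < m * L.length) :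
    ((List.replicate m L).flatten).getD t z = L.getD (t % L.length) z := by
  induction m generalizing t with
  | zero => simp at h
  | succ m ih =>
    rw [List.replicate_succ, List.flatten_cons]
    by_cases ht : t < L.length
    · rw [getD_append_left _ _ _ _ ht, Nat.mod_eq_of_lt ht]
    · push_neg at ht
      have hm1 : (m+1) * L.length = m * L.length + L.length := by ring
      rw [getD_append_right _ _ _ _ ht, ih _ (by omega)]
      congr 1
      rw [← Nat.mod_eq_sub_mod ht]

lemma getD_rotate (L : List α) (z : α) (i t : ℕ) (h : t < L.length) :
    (L.rotate i).getD t z = L.getD ((t + i) % L.length) z := by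
  have h1 : t < (L.rotate i).length := by rwa [List.length_rotate]
  rw [List.getD_eq_getElem _ _ h1, List.getElem_rotate,
    List.getD_eq_getElem _ _ (Nat.mod_lt _ (by omega))]

lemma not_lex_self [LinearOrder α] : ∀ X : List α, ¬ List.Lex (· < ·) X X := by
  intro X h
  induction X with
  | nil => cases h
  | cons c l ih =>
    cases h with
    | cons h' => exact ih h'
    | rel h' => exact lt_irrefl _ h'

lemma lex_of_firstdiff [LinearOrder α] (z : α) :
    ∀ (m : ℕ) (X Y : List α), X.length = Y.length → m < Y.length →
    (∀ t, t < m → X.getD t z = Y.getD t z) → X.getD m z < Y.getD m z →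
    List.Lex (· < ·) X Y := by
  intro m
  induction m with
  | zero =>
    intro X Y hlen hm _ hlt
    match X, Y with
    | [], _ => simp at hlen; omega
    | x :: xs, [] => simp at hm
    | x :: xs, y :: ys => exact List.Lex.rel hlt
  | succ m ih =>
    intro X Y hlen hm hag hlt
    match X, Y with
    | [], _ => simp at hlen; omega
    | x :: xs, [] => simp at hm
    | x :: xs, y :: ys =>
      have h0 : x = y := hag 0 (Nat.succ_pos _)
      subst h0
      exact List.Lex.cons (ih xs ys (by simpa using hlen) (by simpa using hm)
        (fun t ht => hag (t+1) (by omega)) hlt)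

lemma not_lex_of_firstdiff [LinearOrder α] (z : α) :
    ∀ (m : ℕ) (X Y : List α), X.length = Y.length →
    (∀ t, t < m → X.getD t z = Y.getD t z) → X.getD m z < Y.getD m z →
    ¬ List.Lex (· < ·) Y X := by
  intro m
  induction m with
  | zero =>
    intro X Y hlen _ hlt hLex
    match X, Y, hLex with
    | _, [], List.Lex.nil => simp at hlen
    | x :: xs, y :: ys, hLex =>
      cases hLex with
      | cons h' => exact lt_irrefl _ hlt
      | rel h' => exact lt_asymm hlt h'
  | succ m ih =>
    intro X Y hlen hag hlt hLex
    match X, Y, hLex with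
    | _, [], List.Lex.nil => simp at hlen
    | x :: xs, y :: ys, hLex =>
      have h0 : x = y := hag 0 (Nat.succ_pos _)
      subst h0
      cases hLex with
      | cons h' =>
        exact ih xs ys (by simpa using hlen) (fun t ht => hag (t+1) (by omega)) hlt h'
      | rel h' => exact lt_irrefl _ h'

/-- cyclic period property -/
def Per (L : List α) (z : α) (d : ℕ) : Prop :=
  ∀ t, t < L.length → L.getD ((t + d) % L.length) z = L.getD t z

lemma per_sub (L : List α) (z : α) {d e : ℕ} (hde : d ≤ e)
    (hd : Per L z d) (he : Per L z e) : Per L z (e - d) := by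
  intro t ht
  have hn : 0 < L.length := by omega
  have h1 := hd ((t + (e - d)) % L.length) (Nat.mod_lt _ hn)
  rw [Nat.mod_add_mod] at h1
  have : t + (e - d) + d = t + e := by omega
  rw [this] at h1
  rw [← h1, he t ht]

lemma per_mod (L : List α) (z : α) {e : ℕ} (he0 : 0 < e) (he : Per L z e) :
    ∀ d, Per L z d → Per L z (d % e) := by
  intro d
  induction d using Nat.strong_induction_on with
  | _ d ih =>
    intro hd
    rcases lt_or_ge d e with h | h
    · rwa [Nat.mod_eq_of_lt h]
    · rw [Nat.mod_eq_sub_mod h]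
      exact ih (d - e) (by omega) (per_sub L z h he hd)

lemma per_gcd (L : List α) (z : α) : ∀ a b : ℕ, Per L z a → Per L z b →
    Per L z (Nat.gcd a b) := by
  intro a
  induction a using Nat.strong_induction_on with
  | _ a ih =>
    intro b ha hb
    rcases Nat.eq_zero_or_pos a with h0 | h0
    · subst h0; simpa using hb
    · rw [Nat.gcd_rec]
      exact ih (b % a) (Nat.mod_lt _ h0) a (per_mod L z h0 ha b hb) ha

lemma getD_mod_of_per (L : List α) (z : α) {d : ℕ} (hd : 0 < d) (hper : Per L z d) :
    ∀ t, t < L.length → L.getD t z = L.getD (t % d) z := by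
  intro t
  induction t using Nat.strong_induction_on with
  | _ t ih =>
    intro ht
    rcases lt_or_ge t d with h | h
    · rw [Nat.mod_eq_of_lt h]
    · have h1 := hper (t - d) (by omega)
      have h2 : t - d + d = t := by omega
      rw [h2, Nat.mod_eq_of_lt ht] at h1
      rw [h1, ih (t - d) (by omega) (by omega), ← Nat.mod_eq_sub_mod h]

lemma eq_flatten_of_per (L : List α) (z : α) {d : ℕ} (hd : 0 < d)
    (hdvd : d ∣ L.length) (hper : Per L z d) :
    L = (List.replicate (L.length / d) (L.take d)).flatten := by
  rcases Nat.eq_zero_or_pos L.length with h0 | h0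
  · rw [List.length_eq_zero_iff.mp h0]; simp
  have hdn : d ≤ L.length := Nat.le_of_dvd h0 hdvd
  have hlen1 : (L.take d).length = d := by simp [Nat.min_eq_left hdn]
  have hlen : ((List.replicate (L.length / d) (L.take d)).flatten).length = L.length := by
    rw [len_flatten_replicate, hlen1, Nat.div_mul_cancel hdvd]
  apply List.ext_getElem hlen.symm
  intro i h1 h2
  rw [← List.getD_eq_getElem L z h1, ← List.getD_eq_getElem _ z h2,
    getD_flatten_replicate _ z _ _ (by rw [hlen1, Nat.div_mul_cancel hdvd]; exact h1),
    hlen1, getD_take _ _ _ _ (Nat.mod_lt _ hd)]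
  exact getD_mod_of_per L z hd hper i h1

lemma takeWhile_replicate_append (f : α → Bool) (zc cc : α) (hz : f zc = true) (hc : f cc = false) :
    ∀ (m : ℕ) (l : List α), ((List.replicate m zc ++ cc :: l).takeWhile f) = List.replicate m zc := by
  intro m
  induction m with
  | zero => intro l; simp [List.takeWhile_cons, hc]
  | succ m ih =>
    intro l
    rw [List.replicate_succ, List.cons_append, List.takeWhile_cons, hz]
    simp [ih l]

end Stmt17Aux

set_option maxHeartbeats 1000000 in
open Stmt17Aux in
lemma masterLemma {s : ℕ} (n k p q : ℕ) (z cc : Fin s) (A B : List (Fin s)) (a : Fin s)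
    (hk : 0 < k) (hkn : k ∣ n) (hq : 1 ≤ q) (hp0 : 0 < p) (hn2 : n = p * q + p)
    (hkp : k ∣ p) (hpn' : p ∣ n)
    (hAlen : A.length = n) (hBlen : B.length = n)
    (hmin : ∀ g, 0 < g → k ∣ g → g ∣ n → Per A z g → p ≤ g)
    (hPerp : Per A z p)
    (hmax' : ∀ i, k ∣ i → ¬ List.Lex (· < ·) A (A.rotate i))
    (hB1 : ∀ t, t < p - 1 → B.getD t z = A.getD t z)
    (hB2 : B.getD (p - 1) z = cc)
    (hB3 : ∀ t, p ≤ t → t < n → B.getD t z = z)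
    (hAa : A.getD (p - 1) z = a)
    (hz_lt : ∀ w : Fin s, w ≠ z → z < w)
    (hccne : cc ≠ z)
    (hca : cc.val = a.val + 1) :
    ∀ j, 0 < j → j < n → k ∣ j →
      ∃ m, m < n ∧ (∀ t, t < m → (B.rotate j).getD t z = B.getD t z) ∧
        (B.rotate j).getD m z < B.getD m z := by
  intro j hj0 hjn hkj
  have hppq : p ≤ p * q := Nat.le_mul_of_pos_right p (by omega)
  have hrotA : ∀ i t, t < n → (A.rotate i).getD t z = A.getD ((t + i) % n) z := by
    intro i t ht
    rw [getD_rotate A z i t (by rw [hAlen]; exact ht), hAlen]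
  have hrotB : ∀ t, t < n → ∀ i, (B.rotate i).getD t z = B.getD ((t + i) % n) z := by
    intro t ht i
    rw [getD_rotate B z i t (by rw [hBlen]; exact ht), hBlen]
  rcases lt_or_ge j p with hjp | hjp
  · -- CASE 1 : 0 < j < p
    have hnper : ¬ Per A z j := by
      intro hper
      have hg : Per A z (Nat.gcd j p) := per_gcd A z j p hper hPerp
      have hgle : p ≤ Nat.gcd j p := hmin _ (Nat.gcd_pos_of_pos_left p hj0)
        (Nat.dvd_gcd hkj hkp) ((Nat.gcd_dvd_right j p).trans hpn') hg
      have hgj : Nat.gcd j p ≤ j := Nat.gcd_le_left p hj0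
      omega
    have hex : ∃ t, t < n ∧ A.getD ((t + j) % n) z ≠ A.getD t z := by
      by_contra hcon
      push_neg at hcon
      apply hnper
      intro t ht
      rw [hAlen] at ht ⊢
      exact hcon t ht
    obtain ⟨ht0n, ht0ne⟩ := Nat.find_spec hex
    have ht0min' : ∀ u, u < Nat.find hex → A.getD ((u + j) % n) z = A.getD u z := by
      intro u hu
      have h6 := Nat.find_min hex hu
      push_neg at h6
      exact h6 (by omega)
    have ht0min2' : ∀ u, u < Nat.find hex → ¬(u < n ∧ A.getD ((u + j) % n) z ≠ A.getD u z) :=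
      fun u hu => Nat.find_min hex hu
    set t0 := Nat.find hex with ht0def
    clear_value t0
    have ht0min := ht0min'
    have ht0p : t0 < p := by
      by_contra hge
      push_neg at hge
      refine absurd ⟨by omega, ?_⟩ (ht0min2' (t0 - p) (show t0 - p < t0 by omega))
      have e1 : A.getD ((t0 - p + j) % n) z = A.getD ((t0 + j) % n) z := by
        have h1 := hPerp ((t0 - p + j) % n) (by rw [hAlen]; exact Nat.mod_lt _ (by omega))
        rw [hAlen, Nat.mod_add_mod, show t0 - p + j + p = t0 + j from by omega] at h1
        exact h1.symm
      have e2 : A.getD (t0 - p) z = A.getD t0 z := by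
        have h1 := hPerp (t0 - p) (by rw [hAlen]; omega)
        rw [hAlen, show t0 - p + p = t0 from by omega, Nat.mod_eq_of_lt ht0n] at h1
        exact h1.symm
      rw [e1, e2]
      exact ht0ne
    have hdir : A.getD ((t0 + j) % n) z < A.getD t0 z := by
      rcases lt_trichotomy (A.getD ((t0 + j) % n) z) (A.getD t0 z) with h | h | h
      · exact h
      · exact absurd h ht0ne
      · exfalso
        apply hmax' j hkj
        apply lex_of_firstdiff z t0 A (A.rotate j) (by rw [List.length_rotate])
          (by rw [List.length_rotate, hAlen]; exact ht0n)
        · intro t ht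
          rw [hrotA j t (by omega)]
          exact (ht0min t ht).symm
        · rw [hrotA j t0 ht0n]
          exact h
    have hborder : t0 + j ≤ p - 1 := by
      by_contra hgt
      push_neg at hgt
      apply hmax' (p - j) (Nat.dvd_sub hkp hkj)
      apply lex_of_firstdiff z (t0 - (p - j)) A (A.rotate (p - j))
        (by rw [List.length_rotate]) (by rw [List.length_rotate, hAlen]; omega)
      · intro t ht
        rw [hrotA (p - j) t (by omega),
          Nat.mod_eq_of_lt (show t + (p - j) < n from by omega)]
        have h1 := ht0min (t + (p - j)) (by omega)
        rw [show t + (p - j) + j = t + p from by omega] at h1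
        have h2 := hPerp t (by rw [hAlen]; omega)
        rw [hAlen] at h2
        rw [← h2, h1]
      · rw [hrotA (p - j) (t0 - (p - j)) (by omega),
          Nat.mod_eq_of_lt (show t0 - (p - j) + (p - j) < n from by omega),
          show t0 - (p - j) + (p - j) = t0 from by omega]
        have h1 : A.getD ((t0 + j) % n) z = A.getD (t0 - (p - j)) z := by
          have h2 := hPerp (t0 - (p - j)) (by rw [hAlen]; omega)
          rw [hAlen, show t0 - (p - j) + p = t0 + j from by omega] at h2
          exact h2
        rw [← h1]
        exact hdir
    have hagB : ∀ t, t < t0 → (B.rotate j).getD t z = B.getD t z := by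
      intro t ht
      rw [hrotB t (by omega) j, Nat.mod_eq_of_lt (show t + j < n from by omega),
        hB1 (t + j) (by omega), hB1 t (by omega)]
      have h1 := ht0min t ht
      rw [Nat.mod_eq_of_lt (show t + j < n from by omega)] at h1
      exact h1
    rcases eq_or_lt_of_le hborder with heq | hlt2
    · -- t0 + j = p - 1
      have hdirm : a < A.getD t0 z := by
        have h1 := hdir
        rw [Nat.mod_eq_of_lt (show t0 + j < n from by omega), heq, hAa] at h1
        exact h1
      have ht0p1 : t0 < p - 1 := by omega
      rcases lt_trichotomy cc (A.getD t0 z) with h3 | h3 | h3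
      · refine ⟨t0, by omega, hagB, ?_⟩
        rw [hrotB t0 (by omega) j, Nat.mod_eq_of_lt (by omega : t0 + j < n), heq, hB2,
          hB1 t0 ht0p1]
        exact h3
      · have hex2 : ∃ t, t0 < t ∧ t ≤ p - 1 ∧ B.getD t z ≠ z :=
          ⟨p - 1, ht0p1, le_refl _, by rw [hB2]; exact hccne⟩
        obtain ⟨hm1, hm2, hm3⟩ := Nat.find_spec hex2
        have hminm' : ∀ t, t < Nat.find hex2 → ¬(t0 < t ∧ t ≤ p - 1 ∧ B.getD t z ≠ z) :=
          fun t ht => Nat.find_min hex2 ht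
        set m := Nat.find hex2 with hmdef
        clear_value m
        refine ⟨m, by omega, ?_, ?_⟩
        · intro t ht
          rcases lt_trichotomy t t0 with h4 | h4 | h4
          · exact hagB t h4
          · rw [h4]
            rw [hrotB t0 (by omega) j, Nat.mod_eq_of_lt (by omega : t0 + j < n), heq, hB2,
              hB1 t0 ht0p1]
            exact h3
          · have h5 : B.getD t z = z := by
              have h6 := hminm' t ht
              push_neg at h6
              exact h6 h4 (by omega)
            rw [h5, hrotB t (by omega) j,
              Nat.mod_eq_of_lt (show t + j < n from by omega)]
            exact hB3 (t + j) (by omega) (by omega)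
        · rw [hrotB m (by omega) j, Nat.mod_eq_of_lt (show m + j < n from by omega),
            hB3 (m + j) (by omega) (by omega)]
          exact hz_lt _ hm3
      · exfalso
        have h6 : (A.getD t0 z).val < a.val + 1 := by
          rw [← hca]
          exact h3
        have h7 : a.val < (A.getD t0 z).val := hdirm
        omega
    · -- t0 + j < p - 1
      refine ⟨t0, by omega, hagB, ?_⟩
      rw [hrotB t0 (by omega) j, Nat.mod_eq_of_lt (show t0 + j < n from by omega),
        hB1 (t0 + j) hlt2, hB1 t0 (by omega)]
      have h1 := hdir
      rw [Nat.mod_eq_of_lt (show t0 + j < n from by omega)] at h1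
      exact h1
  · rcases le_or_gt j (p * q) with hjq | hjq
    · -- CASE 2 : p ≤ j ≤ p * q
      have hex2 : ∃ t, t ≤ p - 1 ∧ B.getD t z ≠ z :=
        ⟨p - 1, le_refl _, by rw [hB2]; exact hccne⟩
      obtain ⟨hm1, hm2⟩ := Nat.find_spec hex2
      have hminm' : ∀ t, t < Nat.find hex2 → ¬(t ≤ p - 1 ∧ B.getD t z ≠ z) :=
        fun t ht => Nat.find_min hex2 ht
      set m := Nat.find hex2 with hmdef
      clear_value m
      refine ⟨m, by omega, ?_, ?_⟩
      · intro t ht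
        have h5 : B.getD t z = z := by
          have h6 := hminm' t ht
          push_neg at h6
          exact h6 (by omega)
        rw [h5, hrotB t (by omega) j, Nat.mod_eq_of_lt (show t + j < n from by omega)]
        exact hB3 (t + j) (by omega) (by omega)
      · rw [hrotB m (by omega) j, Nat.mod_eq_of_lt (show m + j < n from by omega),
          hB3 (m + j) (by omega) (by omega)]
        exact hz_lt _ hm2
    · -- CASE 3 : p * q < j < n
      have hj'0 : 0 < n - j := by omega
      have hj'p : n - j < p := by omega
      have hkj' : k ∣ n - j := Nat.dvd_sub hkn hkj
      have hkj'' : k ≤ n - j := Nat.le_of_dvd hj'0 hkj'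
      have hex3 : ∃ t, t < n - j ∧ B.getD t z ≠ z := by
        by_contra hcon
        push_neg at hcon
        have hallA : ∀ t, t < n - j → A.getD t z = z := by
          intro t ht
          rw [← hB1 t (by omega)]
          exact hcon t ht
        have hzero : ∀ i, k ∣ i → ∀ t, t < n - j → A.getD ((i + t) % n) z = z := by
          intro i hki t
          induction t using Nat.strong_induction_on with
          | _ t ih =>
            intro ht
            by_contra hne
            apply hmax' i hki
            apply lex_of_firstdiff z t A (A.rotate i) (by rw [List.length_rotate])
              (by rw [List.length_rotate, hAlen]; omega)
            · intro u hu
              rw [hrotA i u (by omega), hallA u (by omega),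
                show u + i = i + u from by omega]
              exact (ih u hu (by omega)).symm
            · rw [hrotA i t (by omega), hallA t ht, show t + i = i + t from by omega]
              exact hz_lt _ hne
        have hAz : ∀ u, u < n → A.getD u z = z := by
          intro u hu
          have h1 := hzero (k * (u / k)) (dvd_mul_right k _) (u % k)
            (by have := Nat.mod_lt u hk; omega)
          rwa [Nat.div_add_mod, Nat.mod_eq_of_lt hu] at h1
        have hPerk : Per A z k := by
          intro t ht
          rw [hAlen] at ht ⊢
          rw [hAz _ (Nat.mod_lt _ (by omega)), hAz t ht]
        have := hmin k hk (dvd_refl k) hkn hPerk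
        omega
      obtain ⟨hm1, hm2⟩ := Nat.find_spec hex3
      have hminm' : ∀ t, t < Nat.find hex3 → ¬(t < n - j ∧ B.getD t z ≠ z) :=
        fun t ht => Nat.find_min hex3 ht
      set m := Nat.find hex3 with hmdef
      clear_value m
      have hmin3 : ∀ t, t < m → B.getD t z = z := by
        intro t ht
        have h6 := hminm' t ht
        push_neg at h6
        exact h6 (by omega)
      refine ⟨m, by omega, ?_, ?_⟩
      · intro t ht
        rw [hmin3 t ht, hrotB t (by omega) j,
          Nat.mod_eq_of_lt (show t + j < n from by omega)]
        exact hB3 (t + j) (by omega) (by omega)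
      · rw [hrotB m (by omega) j, Nat.mod_eq_of_lt (show m + j < n from by omega),
          hB3 (m + j) (by omega) (by omega)]
        exact hz_lt _ hm2


open Stmt17Aux in
/-- Let `k ∣ n` and let `⟨(A_p)^{q+1},0⟩` be a maximal pair whose reduction is `A_p = P`
(of length `p`), with `q ≥ 1`. If the last symbol `a` of `P` satisfies `a < s-1`, then
`𝒬 = ⟨P_{p-1}(a+1)0^{pq}, 0⟩` is maximal and `θ(𝒬) = ⟨(A_p)^{q+1},0⟩`. -/
theorem stmt17 (s n k : ℕ) (hs : 2 ≤ s) (hn : 0 < n) (hk : 0 < k) (hkn : k ∣ n)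
    (P : List (Fin s)) (p q : ℕ) (hp : P.length = p) (hq : 1 ≤ q)
    (hlen : ((List.replicate (q + 1) P).flatten).length = n)
    (hred : reduceWord s k ((List.replicate (q + 1) P).flatten) = P)
    (hmax : isMaxPair s k ((List.replicate (q + 1) P).flatten, (0 : ZMod k)))
    (a : Fin s) (ha : P[p - 1]? = some a) (ha' : a.val < s - 1) :
    isMaxPair s k
      ((P.take (p - 1) ++ (⟨a.val + 1, by omega⟩ : Fin s) ::
          List.replicate (p * q) (⟨0, by omega⟩ : Fin s)), (0 : ZMod k)) ∧
    thetaPair s k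
        ((P.take (p - 1) ++ (⟨a.val + 1, by omega⟩ : Fin s) ::
          List.replicate (p * q) (⟨0, by omega⟩ : Fin s)), (0 : ZMod k)) =
      ((List.replicate (q + 1) P).flatten, 0) := by
  haveI : NeZero k := ⟨hk.ne'⟩
  set z : Fin s := (⟨0, by omega⟩ : Fin s) with hz
  set c : Fin s := (⟨a.val + 1, by omega⟩ : Fin s) with hc
  set A : List (Fin s) := (List.replicate (q + 1) P).flatten with hA
  set B : List (Fin s) := P.take (p - 1) ++ c :: List.replicate (p * q) z with hB
  have hAlen : A.length = n := hlen
  have hn' : n = (q + 1) * p := by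
    rw [← hAlen, hA, len_flatten_replicate, hp]
  have hp0 : 0 < p := by
    rcases Nat.eq_zero_or_pos p with h0 | h0
    · rw [h0, Nat.mul_zero] at hn'; omega
    · exact h0
  have hn2 : n = p * q + p := by rw [hn']; ring
  have h2p : 2 * p ≤ n := by nlinarith
  -- reduction facts
  have hSne : {g : ℕ | k ∣ g ∧ g ∣ A.length ∧
      A = (List.replicate (A.length / g) (A.take g)).flatten}.Nonempty := by
    refine ⟨A.length, by rw [hAlen]; exact hkn, dvd_refl _, ?_⟩
    rw [Nat.div_self (by omega), List.take_length]
    simp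
  have hrdef : reduceLen s k A = sInf {g : ℕ | k ∣ g ∧ g ∣ A.length ∧
      A = (List.replicate (A.length / g) (A.take g)).flatten} := rfl
  have hrmem := Nat.sInf_mem hSne
  have hrle : reduceLen s k A ≤ n := by
    rw [hrdef, ← hAlen]
    exact Nat.sInf_le ⟨by rw [hAlen]; exact hkn, dvd_refl _, by
      rw [Nat.div_self (by omega), List.take_length]; simp⟩
  have hred' : A.take (reduceLen s k A) = P := hred
  have hr : reduceLen s k A = p := by
    have h1 := congrArg List.length hred'
    rw [List.length_take, hAlen, hp, Nat.min_eq_left hrle] at h1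
    exact h1
  rw [hrdef] at hr
  rw [hr] at hrmem
  obtain ⟨hkp, hpn', hAflat⟩ := hrmem
  rw [hAlen] at hpn'
  have hPA : A.take p = P := by rw [hrdef, hr] at hred'; exact hred'
  have hmin : ∀ g, 0 < g → k ∣ g → g ∣ n → Per A z g → p ≤ g := by
    intro g hg hkg hgn hper
    have heq := eq_flatten_of_per A z hg (by rw [hAlen]; exact hgn) hper
    have hle := Nat.sInf_le (s := {g : ℕ | k ∣ g ∧ g ∣ A.length ∧
      A = (List.replicate (A.length / g) (A.take g)).flatten})
      ⟨hkg, by rw [hAlen]; exact hgn, heq⟩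
    omega
  have hAP : ∀ t, t < n → A.getD t z = P.getD (t % p) z := by
    intro t ht
    rw [hA, getD_flatten_replicate P z (q+1) t (by rw [hp]; omega), hp]
  have hPerp : Per A z p := by
    intro t ht
    rw [hAlen] at ht ⊢
    rw [hAP _ (Nat.mod_lt _ (by omega)), hAP t ht,
      Nat.mod_mod_of_dvd _ hpn', Nat.add_mod_right]
  have hmax' : ∀ i, k ∣ i → ¬ List.Lex (· < ·) A (A.rotate i) := by
    intro i hki hL
    exact hmax i (Or.inl ⟨hL, show (0 : ZMod k) + (i : ℕ) = 0 by
      rw [zero_add]; exact (ZMod.natCast_eq_zero_iff i k).mpr hki⟩)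
  have hTlen : (P.take (p - 1)).length = p - 1 := by
    rw [List.length_take, hp, Nat.min_eq_left (by omega)]
  have hBlen : B.length = n := by
    rw [hB, List.length_append, hTlen, List.length_cons, List.length_replicate]
    omega
  have hB1 : ∀ t, t < p - 1 → B.getD t z = A.getD t z := by
    intro t ht
    rw [hB, getD_append_left _ _ _ _ (by rw [hTlen]; exact ht),
      getD_take _ _ _ _ ht, hAP t (by omega), Nat.mod_eq_of_lt (by omega)]
  have hB2 : B.getD (p - 1) z = c := by
    rw [hB, getD_append_right _ _ _ _ (by rw [hTlen]), hTlen, Nat.sub_self,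
      getD_cons_zero]
  have hB3 : ∀ t, p ≤ t → t < n → B.getD t z = z := by
    intro t h1 h2
    rw [hB, getD_append_right _ _ _ _ (by rw [hTlen]; omega), hTlen,
      show t - (p - 1) = (t - p) + 1 by omega, getD_cons_succ,
      getD_replicate _ _ _ _ (by omega)]
  have hAa : A.getD (p - 1) z = a := by
    rw [hAP _ (by omega), Nat.mod_eq_of_lt (by omega),
      List.getD_eq_getElem?_getD, ha]
    rfl
  have hz_lt : ∀ w : Fin s, w ≠ z → z < w := by
    intro w hw
    rcases Nat.eq_zero_or_pos w.val with h0 | h0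
    · exact absurd (Fin.ext h0) hw
    · exact h0
  have hc_ne : c ≠ z := by
    intro h
    have := congrArg Fin.val h
    simp [hc, hz] at this
  have master := masterLemma n k p q z c A B a hk hkn hq hp0 hn2 hkp hpn'
    hAlen hBlen hmin hPerp hmax' hB1 hB2 hB3 hAa hz_lt hc_ne (by rw [hc])
  constructor
  · intro i hsucc
    rcases hsucc with ⟨hL, he⟩ | hv
    · have hki : k ∣ i := by
        have h0 : ((i : ℕ) : ZMod k) = 0 := by
          have := he
          simp only [rotPair] at this
          rwa [zero_add] at this
        exact (ZMod.natCast_eq_zero_iff i k).mp h0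
      have hL' : List.Lex (· < ·) B (B.rotate i) := hL
      have hrot : B.rotate i = B.rotate (i % n) := by
        conv_lhs => rw [← List.rotate_mod]
        rw [hBlen]
      rcases Nat.eq_zero_or_pos (i % n) with h0 | h0
      · rw [hrot, h0, List.rotate_zero] at hL'
        exact not_lex_self _ hL'
      · obtain ⟨m, hm, hag, hlt⟩ := master (i % n) h0 (Nat.mod_lt _ (by omega))
          ((Nat.dvd_mod_iff hkn).mpr hki)
        rw [hrot] at hL'
        exact not_lex_of_firstdiff z m _ _ (by rw [List.length_rotate]) hag hlt hL'
    · simp only [rotPair, ZMod.val_zero] at hv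
      omega
  · have hrev : B.reverse.takeWhile (fun x => x.val == 0) = List.replicate (p * q) z := by
      rw [hB, List.reverse_append, List.reverse_cons, List.reverse_replicate,
        List.append_assoc, List.singleton_append]
      exact takeWhile_replicate_append _ z c rfl (by simp [hc]) _ _
    have hitw : B.length - (B.reverse.takeWhile (fun x => x.val == 0)).length = p := by
      rw [hrev, hBlen, List.length_replicate]; omega
    have hgetc : B[p - 1]? = some c := by
      rw [hB, List.getElem?_append, hTlen]
      rw [if_neg (lt_irrefl _), Nat.sub_self, List.getElem?_cons_zero]
    have htw : thetaWord s k B = A := by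
      unfold thetaWord
      simp only [hrev, hBlen, List.length_replicate]
      have e1 : n - p * q = p := by omega
      rw [e1]
      have e2 : (n - p) % k = 0 := by
        have h1 : k ∣ p * q := Dvd.dvd.mul_right hkp q
        have h2 : n - p = p * q := by omega
        rw [h2]
        exact Nat.mod_eq_zero_of_dvd h1
      have e3 : n / p = q + 1 := by rw [hn']; exact Nat.mul_div_cancel _ hp0
      simp only [hgetc]
      rw [e2, Nat.add_zero, e3, Nat.sub_self, List.replicate_zero, ← hn', Nat.sub_self,
        List.take_zero, List.append_nil]
      rw [hB, List.take_left' hTlen]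
      simp only [hc, Nat.add_sub_cancel, Fin.eta]
      have h1 : p - 1 < P.length := by omega
      have hPq : List.take (p - 1) P ++ [a] = P := by
        conv_rhs => rw [← List.take_append_drop (p - 1) P]
        congr 1
        rw [List.drop_eq_getElem_cons h1, show p - 1 + 1 = p from by omega,
          List.drop_eq_nil_of_le (by omega)]
        have h2 : P[p-1]'h1 = a := by
          have h3 := ha
          rw [List.getElem?_eq_getElem h1] at h3
          exact Option.some.inj h3
        rw [h2]
      rw [hPq, hA]
    show (thetaWord s k B, (0 : ZMod k)) = (A, 0)
    rw [htw]
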